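/- Under the interference-alignment hypotheses, the k(r−1) + 1 matrices consisting of the identity matrix I together with the encoding matrices C_{u,i} for u ∈ {2,…,r} and i ∈ {1,…,k} form a linearly independent family in the 𝔽-vector space of l × l matrices over 𝔽. -/

import Mathlib

theorem stmt_3 {𝔽 : Type*} [Field 𝔽] (k r l : ℕ)
    (hk : 0 < k) (hr : 2 ≤ r) (hl : 0 < l) (hrl : r ∣ l)
    (S : Fin k → Matrix (Fin (l / r)) (Fin l) 𝔽)
    (C : Fin r → Fin k → Matrix (Fin l) (Fin l) 𝔽)
    (hCinv : ∀ u j, IsUnit (C u j))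
    (hC1 : ∀ j, C ⟨0, by omega⟩ j = 1)
    (hIA1 : ∀ (i j : Fin k), j ≠ i → ∀ u : Fin r,
      Submodule.span 𝔽 (Set.range (S i * C u j)) = Submodule.span 𝔽 (Set.range (S i)))
    (hIA2 : ∀ i : Fin k, iSupIndep
      fun u : Fin r => Submodule.span 𝔽 (Set.range (S i * C u i)))
    (hIA3 : ∀ i : Fin k,
      (⨆ u : Fin r, Submodule.span 𝔽 (Set.range (S i * C u i))) = ⊤)
    :
    LinearIndependent 𝔽
      (fun x : Option ({u : Fin r // (u : ℕ) ≠ 0} × Fin k) =>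
        x.elim (1 : Matrix (Fin l) (Fin l) 𝔽) (fun p => C p.1.1 p.2)) := by
  have hrpos : 0 < r := by omega
  have hβ : 0 < l / r := Nat.div_pos (Nat.le_of_dvd hl hrl) hrpos
  have hlne : Nonempty (Fin l) := ⟨⟨0, hl⟩⟩
  have hβne : Nonempty (Fin (l / r)) := ⟨⟨0, hβ⟩⟩
  set zero : Fin r := ⟨0, by omega⟩ with hzero
  -- span of rows of S j * C u j as image
  have hspan : ∀ (j : Fin k) (u : Fin r),
      Submodule.span 𝔽 (Set.range (S j * C u j)) =
        (Submodule.span 𝔽 (Set.range (S j))).map (C u j).vecMulLinear := by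
    intro j u
    rw [Submodule.map_span]
    exact congrArg (Submodule.span 𝔽) (Set.range_comp (⇑(C u j).vecMulLinear) (S j))
  -- nonvanishing of S j * C u j
  have hnz : ∀ (j : Fin k) (u : Fin r), S j * C u j ≠ 0 := by
    intro j u h0
    have hinj : ∀ u' : Fin r, Function.Injective (C u' j).vecMulLinear := by
      intro u'
      rw [Matrix.coe_vecMulLinear]
      exact Matrix.vecMul_injective_iff_isUnit.2 (hCinv u' j)
    have hbase : Submodule.span 𝔽 (Set.range (S j)) = ⊥ := by
      have h1 : Submodule.span 𝔽 (Set.range (S j * C u j)) = ⊥ := by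
        rw [h0, Submodule.span_eq_bot]
        rintro x ⟨v, rfl⟩
        rfl
      rw [hspan j u] at h1
      exact Submodule.map_injective_of_injective (hinj u)
        (h1.trans (Submodule.map_bot _).symm)
    have htop : (⊤ : Submodule 𝔽 (Fin l → 𝔽)) = ⊥ := by
      rw [← hIA3 j]
      simp only [hspan j, hbase, Submodule.map_bot, iSup_const]
      simp
    have : (1 : Fin l → 𝔽) = 0 := by
      have h1 : (1 : Fin l → 𝔽) ∈ (⊥ : Submodule 𝔽 (Fin l → 𝔽)) := htop ▸ Submodule.mem_top
      simp at h1
    exact one_ne_zero (congrFun this ⟨0, hl⟩)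
  rw [Fintype.linearIndependent_iff]
  intro g hg
  -- coefficients of the C's vanish
  have hp : ∀ (u : {u : Fin r // (u : ℕ) ≠ 0}) (j : Fin k), g (some (u, j)) = 0 := by
    intro u j
    set W : Fin r → Submodule 𝔽 (Fin l → 𝔽) :=
      fun u' => Submodule.span 𝔽 (Set.range (S j * C u' j)) with hW
    have hWzero : Submodule.span 𝔽 (Set.range (S j)) = W zero := by
      rw [hW]
      simp only [hC1 j, Matrix.mul_one]
    have hu0 : u.1 ≠ zero := by
      intro h
      exact u.2 (by rw [h])
    -- multiply the relation on the left by S j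
    have h1 : ∑ x : Option ({u : Fin r // (u : ℕ) ≠ 0} × Fin k),
        g x • (S j * x.elim (1 : Matrix (Fin l) (Fin l) 𝔽) (fun p => C p.1.1 p.2)) = 0 := by
      calc ∑ x : Option ({u : Fin r // (u : ℕ) ≠ 0} × Fin k),
          g x • (S j * x.elim (1 : Matrix (Fin l) (Fin l) 𝔽) (fun p => C p.1.1 p.2))
          = S j * ∑ x : Option ({u : Fin r // (u : ℕ) ≠ 0} × Fin k),
            g x • x.elim (1 : Matrix (Fin l) (Fin l) 𝔽) (fun p => C p.1.1 p.2) := by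
            rw [Matrix.mul_sum]
            simp_rw [Matrix.mul_smul]
        _ = 0 := by rw [hg, Matrix.mul_zero]
    set x0 : Option ({u : Fin r // (u : ℕ) ≠ 0} × Fin k) := some (u, j) with hx0
    have key : ∀ v : Fin (l / r), g x0 • (S j * C u.1 j) v = 0 := by
      intro v
      have h2 : ∑ x : Option ({u : Fin r // (u : ℕ) ≠ 0} × Fin k),
          g x • (S j * x.elim (1 : Matrix (Fin l) (Fin l) 𝔽) (fun p => C p.1.1 p.2)) v = 0 := by
        funext w
        have h2' := congrFun (congrFun h1 v) w
        simpa [Matrix.sum_apply] using h2'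
      rw [← Finset.add_sum_erase _ _ (Finset.mem_univ x0)] at h2
      have hrest : (∑ x ∈ Finset.univ.erase x0,
          g x • (S j * x.elim (1 : Matrix (Fin l) (Fin l) 𝔽) (fun p => C p.1.1 p.2)) v)
            ∈ ⨆ (w : Fin r) (_ : w ≠ u.1), W w := by
        refine Submodule.sum_mem _ (fun x hx => ?_)
        have hxne : x ≠ x0 := Finset.ne_of_mem_erase hx
        match x with
        | none =>
          refine Submodule.smul_mem _ _ ?_
          have hmem : (S j * (1 : Matrix (Fin l) (Fin l) 𝔽)) v
              ∈ Submodule.span 𝔽 (Set.range (S j)) := by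
            rw [Matrix.mul_one]
            exact Submodule.subset_span (Set.mem_range_self v)
          rw [hWzero] at hmem
          exact le_biSup W hu0.symm hmem
        | some (u', i) =>
          refine Submodule.smul_mem _ _ ?_
          by_cases hi : i = j
          · subst hi
            have hu' : u'.1 ≠ u.1 := by
              intro h
              exact hxne (by rw [hx0]; congr 1; exact Prod.ext (Subtype.ext h) rfl)
            have hmem : (S i * C u'.1 i) v ∈ W u'.1 :=
              Submodule.subset_span (Set.mem_range_self v)
            exact le_biSup W hu' hmem
          · have hmem : (S j * C u'.1 i) v
                ∈ Submodule.span 𝔽 (Set.range (S j * C u'.1 i)) :=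
              Submodule.subset_span (Set.mem_range_self v)
            rw [hIA1 j i hi u'.1, hWzero] at hmem
            exact le_biSup W hu0.symm hmem
      have hL : g x0 • (S j * C u.1 j) v ∈ W u.1 :=
        Submodule.smul_mem _ _ (Submodule.subset_span (Set.mem_range_self v))
      have hR : g x0 • (S j * C u.1 j) v ∈ ⨆ (w : Fin r) (_ : w ≠ u.1), W w := by
        have heq : g x0 • (S j * C u.1 j) v = -(∑ x ∈ Finset.univ.erase x0,
            g x • (S j * x.elim (1 : Matrix (Fin l) (Fin l) 𝔽) (fun p => C p.1.1 p.2)) v) :=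
          eq_neg_of_add_eq_zero_left h2
        rw [heq]
        exact Submodule.neg_mem _ hrest
      exact Submodule.disjoint_def.mp (hIA2 j u.1) _ hL hR
    have hmz : g x0 • (S j * C u.1 j) = 0 := by
      funext v w
      have := congrFun (key v) w
      simpa using this
    rcases smul_eq_zero.mp hmz with h | h
    · exact h
    · exact absurd h (hnz j u.1)
  -- now the identity coefficient
  intro x
  match x with
  | some (u, j) => exact hp u j
  | none =>
    have hp' : ∀ p : {u : Fin r // (u : ℕ) ≠ 0} × Fin k, g (some p) = 0 :=
      fun p => hp p.1 p.2
    have h1 : g none • (1 : Matrix (Fin l) (Fin l) 𝔽) = 0 := by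
      rw [Fintype.sum_option] at hg
      simpa [hp'] using hg
    have h2 := congrFun (congrFun h1 ⟨0, hl⟩) ⟨0, hl⟩
    simpa [Matrix.one_apply_eq] using h2
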